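/- Let a ≤ b be reals and let g, c : ℝ → ℝ be differentiable on [a, b], with g'(l) ≥ 0 for all l ∈ [a, b] and the local incentive condition l·g'(l) − c'(l) = 0 for all l ∈ [a, b]. Then for all φ, φ' ∈ [a, b], the global incentive-compatibility inequality holds: φ·g(φ) − c(φ) ≥ φ·g(φ') − c(φ'). -/

import Mathlib

theorem stmt6 (a b : ℝ) (hab : a ≤ b) (g c g' c' : ℝ → ℝ)
    (hg : ∀ l ∈ Set.Icc a b, HasDerivAt g (g' l) l)
    (hc : ∀ l ∈ Set.Icc a b, HasDerivAt c (c' l) l)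
    (hg' : ∀ l ∈ Set.Icc a b, 0 ≤ g' l)
    (hloc : ∀ l ∈ Set.Icc a b, l * g' l - c' l = 0) :
    ∀ φ ∈ Set.Icc a b, ∀ φ' ∈ Set.Icc a b,
      φ * g φ - c φ ≥ φ * g φ' - c φ' := by
  intro φ hφ φ' hφ'
  set h : ℝ → ℝ := fun l => φ * g l - c l with hh
  have hderiv : ∀ l ∈ Set.Icc a b, HasDerivAt h ((φ - l) * g' l) l := by
    intro l hl
    have := ((hg l hl).const_mul φ).sub (hc l hl)
    have hc' : c' l = l * g' l := by have := hloc l hl; linarith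
    rw [show (φ - l) * g' l = φ * g' l - c' l by rw [hc']; ring]
    exact this
  rcases le_total φ' φ with hle | hle
  · -- h monotone on Icc φ' φ
    have hsub : Set.Icc φ' φ ⊆ Set.Icc a b :=
      Set.Icc_subset_Icc hφ'.1 hφ.2
    have hmono : MonotoneOn h (Set.Icc φ' φ) := by
      apply monotoneOn_of_deriv_nonneg (convex_Icc φ' φ)
      · exact fun l hl => ((hderiv l (hsub hl)).continuousAt).continuousWithinAt
      · intro l hl
        rw [interior_Icc] at hl
        exact (hderiv l (hsub (Set.mem_Icc_of_Ioo hl))).differentiableAt.differentiableWithinAt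
      · intro l hl
        rw [interior_Icc] at hl
        rw [(hderiv l (hsub (Set.mem_Icc_of_Ioo hl))).deriv]
        have := hg' l (hsub (Set.mem_Icc_of_Ioo hl))
        have : l ≤ φ := hl.2.le
        nlinarith [hg' l (hsub (Set.mem_Icc_of_Ioo hl))]
    exact hmono (Set.left_mem_Icc.mpr hle) (Set.right_mem_Icc.mpr hle) hle
  · -- h antitone on Icc φ φ'
    have hsub : Set.Icc φ φ' ⊆ Set.Icc a b :=
      Set.Icc_subset_Icc hφ.1 hφ'.2
    have hanti : AntitoneOn h (Set.Icc φ φ') := by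
      apply antitoneOn_of_deriv_nonpos (convex_Icc φ φ')
      · exact fun l hl => ((hderiv l (hsub hl)).continuousAt).continuousWithinAt
      · intro l hl
        rw [interior_Icc] at hl
        exact (hderiv l (hsub (Set.mem_Icc_of_Ioo hl))).differentiableAt.differentiableWithinAt
      · intro l hl
        rw [interior_Icc] at hl
        rw [(hderiv l (hsub (Set.mem_Icc_of_Ioo hl))).deriv]
        have hlφ : φ ≤ l := hl.1.le
        nlinarith [hg' l (hsub (Set.mem_Icc_of_Ioo hl))]
    exact hanti (Set.left_mem_Icc.mpr hle) (Set.right_mem_Icc.mpr hle) hle
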